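/- Let B be an n×n real symmetric positive definite matrix with simple eigenvalues μ_1 > μ_2 > ... > μ_n > 0 and corresponding orthonormal eigenvectors x_1, ..., x_n. Fix an index i and let x = c_i x_i + c_{i+1} x_{i+1} with c_i ≠ 0 and c_{i+1} ≠ 0. Suppose w ∈ ℝⁿ is nonzero and satisfies (B + αI)w = Bx for some real α > −μ_i, and suppose μ(w) > μ(x). Then w ∈ span{x_i, x_{i+1}}. -/

import Mathlib

noncomputable section

/-- Real matrix-vector multiplication viewed as a map on `EuclideanSpace`. -/
def mulVecEr {n : ℕ} (M : Matrix (Fin n) (Fin n) ℝ) (x : EuclideanSpace ℝ (Fin n)) :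
    EuclideanSpace ℝ (Fin n) :=
  (WithLp.equiv 2 (Fin n → ℝ)).symm (M.mulVec (WithLp.equiv 2 (Fin n → ℝ) x))

/-- The Rayleigh quotient `μ(x) = (x,Bx)/(x,x)`. -/
def RQr {n : ℕ} (B : Matrix (Fin n) (Fin n) ℝ) (x : EuclideanSpace ℝ (Fin n)) : ℝ :=
  (inner ℝ x (mulVecEr B x) : ℝ) / ‖x‖ ^ 2

lemma key_ineq (μi μ1 lam ci ci1 e1 e2 t : ℝ)
    (h01 : 0 < lam) (h12 : lam < μ1) (h2i : μ1 < μi)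
    (he1 : e1 * (μi - lam) = ci * μi) (he2 : e2 * (μ1 - lam) = ci1 * μ1) :
    (e1^2*μi + e2^2*μ1 + t^2*lam) * (ci^2 + ci1^2) ≤ (ci^2*μi + ci1^2*μ1) * (e1^2+e2^2+t^2) := by
  have h1 : (0:ℝ) < μi - lam := by linarith
  have h2 : (0:ℝ) < μ1 - lam := by linarith
  have key : ci1^2*e1^2 ≤ ci^2*e2^2 := by
    have hmul : (0:ℝ) < (μi - lam)^2 * (μ1 - lam)^2 := by positivity
    rw [← mul_le_mul_iff_of_pos_right hmul]
    have hA : ci1^2*e1^2 * ((μi - lam)^2 * (μ1 - lam)^2) = ci1^2 * ci^2 * (μi * (μ1 - lam))^2 := by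
      linear_combination (ci1^2*(μ1-lam)^2*(e1*(μi-lam)+ci*μi)) * he1
    have hB : ci^2*e2^2 * ((μi - lam)^2 * (μ1 - lam)^2) = ci^2 * ci1^2 * (μ1 * (μi - lam))^2 := by
      linear_combination (ci^2*(μi-lam)^2*(e2*(μ1-lam)+ci1*μ1)) * he2
    rw [hA, hB]
    have hord : μi * (μ1 - lam) ≤ μ1 * (μi - lam) := by nlinarith
    have h0 : (0:ℝ) ≤ μi * (μ1 - lam) := mul_nonneg (by linarith) h2.le
    have := mul_le_mul_of_nonneg_left (pow_le_pow_left₀ h0 hord 2)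
      (by positivity : (0:ℝ) ≤ ci^2*ci1^2)
    nlinarith [this]
  nlinarith [mul_nonneg (mul_nonneg (sq_nonneg t) (sq_nonneg ci)) h1.le,
    mul_nonneg (mul_nonneg (sq_nonneg t) (sq_nonneg ci1)) h2.le,
    mul_nonneg (sub_nonneg.2 key) (by linarith : (0:ℝ) ≤ μi - μ1)]

lemma sum_collapse2 {M : Type*} [AddCommMonoid M] {n : ℕ} (i j : Fin n) (hij : i ≠ j)
    (g : Fin n → M) (hg : ∀ k, k ≠ i → k ≠ j → g k = 0) : ∑ k, g k = g i + g j := by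
  classical
  have h : ∀ k ∈ Finset.univ, g k = (if k = i then g i else 0) + (if k = j then g j else 0) := by
    intro k _
    by_cases h1 : k = i
    · subst h1; simp [if_neg hij]
    by_cases h2 : k = j
    · subst h2; simp [if_neg h1]
    · simp [h1, h2, hg k h1 h2]
  rw [Finset.sum_congr rfl h, Finset.sum_add_distrib]
  simp

lemma sum_collapse3 {M : Type*} [AddCommMonoid M] {n : ℕ} (i j l : Fin n)
    (hij : i ≠ j) (hil : i ≠ l) (hjl : j ≠ l)
    (g : Fin n → M) (hg : ∀ k, k ≠ i → k ≠ j → k ≠ l → g k = 0) :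
    ∑ k, g k = g i + g j + g l := by
  classical
  have h : ∀ k ∈ Finset.univ, g k =
      (if k = i then g i else 0) + (if k = j then g j else 0) + (if k = l then g l else 0) := by
    intro k _
    by_cases h1 : k = i
    · subst h1; simp [if_neg hij, if_neg hil]
    by_cases h2 : k = j
    · subst h2; simp [if_neg h1, if_neg hjl]
    by_cases h3 : k = l
    · subst h3; simp [if_neg h1, if_neg h2]
    · simp [h1, h2, h3, hg k h1 h2 h3]
  rw [Finset.sum_congr rfl h, Finset.sum_add_distrib, Finset.sum_add_distrib]
  simp

lemma mulVecEr_shift {n : ℕ} (B : Matrix (Fin n) (Fin n) ℝ) (α : ℝ)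
    (w : EuclideanSpace ℝ (Fin n)) :
    mulVecEr (B + α • (1 : Matrix (Fin n) (Fin n) ℝ)) w = mulVecEr B w + α • w := by
  show (WithLp.equiv 2 (Fin n → ℝ)).symm _ = _
  rw [Matrix.add_mulVec, Matrix.smul_mulVec, Matrix.one_mulVec]
  rfl

lemma mulVecEr_exists_linearMap {n : ℕ} (M : Matrix (Fin n) (Fin n) ℝ) :
    ∃ L : EuclideanSpace ℝ (Fin n) →ₗ[ℝ] EuclideanSpace ℝ (Fin n), ∀ v, L v = mulVecEr M v :=
  ⟨((WithLp.linearEquiv 2 ℝ (Fin n → ℝ)).symm.toLinearMap.comp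
      (M.mulVecLin.comp (WithLp.linearEquiv 2 ℝ (Fin n → ℝ)).toLinearMap)), fun _ => rfl⟩

set_option maxHeartbeats 1600000 in
/-- If `x ∈ span{x_i, x_{i+1}}` (with nonzero coefficients), `(B + αI)w = Bx` for some
`α > -μ_i`, and `μ(w) > μ(x)`, then `w ∈ span{x_i, x_{i+1}}`. -/
theorem shifted_solution_stays_in_invariant_subspace
    {n : ℕ} (B : Matrix (Fin n) (Fin n) ℝ) (hB : B.PosDef)
    (μs : Fin n → ℝ) (hdec : StrictAnti μs) (hpos : ∀ k, 0 < μs k)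
    (xs : Fin n → EuclideanSpace ℝ (Fin n)) (hon : Orthonormal ℝ xs)
    (heig : ∀ k, mulVecEr B (xs k) = μs k • xs k)
    (i : Fin n) (hi : (i : ℕ) + 1 < n)
    (ci ci1 : ℝ) (hci : ci ≠ 0) (hci1 : ci1 ≠ 0)
    (x : EuclideanSpace ℝ (Fin n))
    (hx : x = ci • xs i + ci1 • xs ⟨(i : ℕ) + 1, hi⟩)
    (w : EuclideanSpace ℝ (Fin n)) (hw0 : w ≠ 0)
    (α : ℝ) (hα : -μs i < α)
    (hw : mulVecEr (B + α • (1 : Matrix (Fin n) (Fin n) ℝ)) w = mulVecEr B x)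
    (hμw : RQr B x < RQr B w) :
    w ∈ Submodule.span ℝ {xs i, xs ⟨(i : ℕ) + 1, hi⟩} := by
  classical
  have hne : Nonempty (Fin n) := ⟨i⟩
  set i1 : Fin n := ⟨(i : ℕ) + 1, hi⟩ with hi1def
  have hii1 : i ≠ i1 := by
    intro h
    have := congrArg Fin.val h
    simp [hi1def] at this
  have hlti1 : i < i1 := by
    rw [Fin.lt_def]; simp [hi1def]
  -- orthonormal basis representation
  have hcard : Fintype.card (Fin n) = Module.finrank ℝ (EuclideanSpace ℝ (Fin n)) := by simp
  let b : Module.Basis (Fin n) ℝ (EuclideanSpace ℝ (Fin n)) :=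
    basisOfLinearIndependentOfCardEqFinrank hon.linearIndependent hcard
  have hb : ⇑b = xs := coe_basisOfLinearIndependentOfCardEqFinrank _ _
  let ob : OrthonormalBasis (Fin n) ℝ (EuclideanSpace ℝ (Fin n)) :=
    b.toOrthonormalBasis (hb ▸ hon)
  have hob : ⇑ob = xs := by rw [Module.Basis.coe_toOrthonormalBasis, hb]
  set d : Fin n → ℝ := fun k => (inner ℝ (xs k) w : ℝ) with hd
  have hwrepr : w = ∑ k, d k • xs k := by
    have h := ob.sum_repr' w
    rw [hob] at h
    exact h.symm
  clear_value d
  -- orthonormality as ite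
  have hinner : ∀ j k, (inner ℝ (xs j) (xs k) : ℝ) = if j = k then 1 else 0 :=
    orthonormal_iff_ite.mp hon
  -- inner of linear combinations
  have hpick : ∀ (e : Fin n → ℝ) (k : Fin n),
      (inner ℝ (xs k) (∑ m, e m • xs m) : ℝ) = e k := by
    intro e k
    rw [inner_sum]
    simp only [real_inner_smul_right, hinner, mul_ite, mul_one, mul_zero]
    simp
  have hip : ∀ e f : Fin n → ℝ,
      (inner ℝ (∑ k, e k • xs k) (∑ k, f k • xs k) : ℝ) = ∑ k, e k * f k := by
    intro e f
    rw [sum_inner]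
    refine Finset.sum_congr rfl fun k _ => ?_
    rw [real_inner_smul_left, hpick]
  -- linearity of mulVecEr B
  obtain ⟨L, hL⟩ := mulVecEr_exists_linearMap (n := n) B
  have hBsum : ∀ e : Fin n → ℝ,
      mulVecEr B (∑ k, e k • xs k) = ∑ k, (e k * μs k) • xs k := by
    intro e
    rw [← hL, map_sum]
    refine Finset.sum_congr rfl fun k _ => ?_
    rw [map_smul, hL, heig, smul_smul]
  -- representation of x
  set c : Fin n → ℝ := fun k => if k = i then ci else if k = i1 then ci1 else 0 with hc
  clear_value c
  have hxrepr : x = ∑ k, c k • xs k := by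
    rw [hx, sum_collapse2 i i1 hii1 (fun k => c k • xs k)
      (fun k h1 h2 => by simp [hc, h1, h2])]
    simp [hc, if_neg (Ne.symm hii1), hii1]
  -- the coefficient equations
  have hBx : mulVecEr B x = ∑ k, (c k * μs k) • xs k := by rw [hxrepr, hBsum]
  have hBw : mulVecEr B w = ∑ k, (d k * μs k) • xs k := by
    conv_lhs => rw [hwrepr]
    rw [hBsum]
  have hco : ∀ k, d k * (μs k + α) = c k * μs k := by
    intro k
    have h := congrArg (fun v => (inner ℝ (xs k) v : ℝ)) hw
    simp only [mulVecEr_shift] at h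
    rw [inner_add_right, hBw, hBx, hpick, hpick, real_inner_smul_right] at h
    have hdk : (inner ℝ (xs k) w : ℝ) = d k := (congrFun hd k).symm
    rw [hdk] at h
    linarith [h]
  -- norms
  have hnx : ‖x‖ ^ 2 = ∑ k, c k * c k := by
    rw [← real_inner_self_eq_norm_sq]
    conv_lhs => rw [hxrepr]
    rw [hip]
  have hnw : ‖w‖ ^ 2 = ∑ k, d k * d k := by
    rw [← real_inner_self_eq_norm_sq]
    conv_lhs => rw [hwrepr]
    rw [hip]
  -- Rayleigh quotients
  have hRx : RQr B x = (∑ k, c k * (c k * μs k)) / (∑ k, c k * c k) := by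
    rw [RQr, hnx, hBx]
    congr 1
    conv_lhs => rw [hxrepr]
    exact hip _ _
  have hRw : RQr B w = (∑ k, d k * (d k * μs k)) / (∑ k, d k * d k) := by
    rw [RQr, hnw, hBw]
    congr 1
    conv_lhs => rw [hwrepr]
    exact hip _ _
  by_cases hA : ∀ k, k ≠ i → k ≠ i1 → d k = 0
  · -- w lies in the span
    have hwspan : w = d i • xs i + d i1 • xs i1 := by
      rw [hwrepr, sum_collapse2 i i1 hii1 (fun k => d k • xs k)
        (fun k h1 h2 => by show d k • xs k = 0; rw [hA k h1 h2, zero_smul])]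
    rw [hwspan]
    exact Submodule.add_mem _
      (Submodule.smul_mem _ _ (Submodule.subset_span (Set.mem_insert _ _)))
      (Submodule.smul_mem _ _ (Submodule.subset_span (by simp)))
  · -- contradiction with the Rayleigh quotient condition
    exfalso
    push_neg at hA
    obtain ⟨j, hji, hji1, hdj⟩ := hA
    have hcj : c j = 0 := by simp [hc, hji, hji1]
    have hαj : μs j + α = 0 := by
      have h := hco j
      rw [hcj, zero_mul] at h
      exact (mul_eq_zero.mp h).resolve_left hdj
    have hij : i < j := by
      have : μs j < μs i := by linarith
      exact (hdec.lt_iff_gt).mp this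
    have hi1j : i1 < j := by
      refine lt_of_le_of_ne ?_ (Ne.symm hji1)
      rw [Fin.le_def]
      simp only [hi1def]
      exact hij
    have hμ1j : μs j < μs i1 := hdec hi1j
    have hμi1 : μs i1 < μs i := hdec hlti1
    have hd0 : ∀ k, k ≠ i → k ≠ i1 → k ≠ j → d k = 0 := by
      intro k h1 h2 h3
      have h := hco k
      rw [show c k = 0 by simp [hc, h1, h2], zero_mul] at h
      rcases mul_eq_zero.mp h with h | h
      · exact h
      · exfalso
        exact h3 (hdec.injective (by linarith))
    have hieqj : i ≠ j := ne_of_lt hij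
    have hi1eqj : i1 ≠ j := ne_of_lt hi1j
    -- equations for d i, d i1
    have he1 : d i * (μs i - μs j) = ci * μs i := by
      have h := hco i
      rw [show c i = ci by simp [hc]] at h
      have : μs i + α = μs i - μs j := by linarith
      rw [this] at h
      exact h
    have he2 : d i1 * (μs i1 - μs j) = ci1 * μs i1 := by
      have h := hco i1
      rw [show c i1 = ci1 by simp [hc, Ne.symm hii1]] at h
      have : μs i1 + α = μs i1 - μs j := by linarith
      rw [this] at h
      exact h
    -- collapse the sums
    have hsw1 : ∑ k, d k * (d k * μs k)
        = d i^2 * μs i + d i1^2 * μs i1 + d j^2 * μs j := by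
      rw [sum_collapse3 i i1 j hii1 hieqj hi1eqj _
        (fun k h1 h2 h3 => by simp [hd0 k h1 h2 h3])]
      ring
    have hsw2 : ∑ k, d k * d k = d i^2 + d i1^2 + d j^2 := by
      rw [sum_collapse3 i i1 j hii1 hieqj hi1eqj _
        (fun k h1 h2 h3 => by simp [hd0 k h1 h2 h3])]
      ring
    have hsx1 : ∑ k, c k * (c k * μs k) = ci^2 * μs i + ci1^2 * μs i1 := by
      rw [sum_collapse2 i i1 hii1 _
        (fun k h1 h2 => by simp [show c k = 0 by simp [hc, h1, h2]]),
        show c i = ci by simp [hc], show c i1 = ci1 by simp [hc, Ne.symm hii1]]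
      ring
    have hsx2 : ∑ k, c k * c k = ci^2 + ci1^2 := by
      rw [sum_collapse2 i i1 hii1 _
        (fun k h1 h2 => by simp [show c k = 0 by simp [hc, h1, h2]]),
        show c i = ci by simp [hc], show c i1 = ci1 by simp [hc, Ne.symm hii1]]
      ring
    -- positivity of denominators
    have hrpos : (0:ℝ) < ci^2 + ci1^2 := by positivity
    have hspos : (0:ℝ) < d i^2 + d i1^2 + d j^2 := by
      have : (0:ℝ) < d j^2 := by
        rcases (sq_nonneg (d j)).lt_or_eq with h | h
        · exact h
        · exact absurd ((pow_eq_zero_iff (two_ne_zero)).mp h.symm) hdj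
      linarith [this, sq_nonneg (d i), sq_nonneg (d i1)]
    -- final contradiction
    rw [hRx, hRw, hsw1, hsw2, hsx1, hsx2, div_lt_div_iff₀ hrpos hspos] at hμw
    have := key_ineq (μs i) (μs i1) (μs j) ci ci1 (d i) (d i1) (d j)
      (hpos j) hμ1j hμi1 he1 he2
    linarith
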